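/- Let (X,d) be a metric space and K a nonempty subset of X. Let A and T be selfmaps of K. Suppose there exist φ ∈ Φ such that for all x, y ∈ K: d(Tx,Ty) ≤ φ(max{d(Ax,Ay), d(Ax,Tx), d(Ay,Ty), min{d(Ay,Tx), d(Ax,Ty)}}). Assume the pair (A,T) is weakly compatible and the closure of T(K) is contained in A(K). If either T(K) or A(K) is complete, then A and T have a unique common fixed point. -/

import Mathlib

open Set
open scoped NNReal

/-- `φ ∈ Φ`: monotonically increasing, continuous, `0 < φ(t) < t` for `t > 0`. -/
def InPhi (φ : ℝ≥0 → ℝ≥0) : Prop :=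
  Monotone φ ∧ Continuous φ ∧ ∀ t, 0 < t → 0 < φ t ∧ φ t < t

lemma InPhi.eq_zero {φ : ℝ≥0 → ℝ≥0} (hφ : InPhi φ) {t : ℝ≥0} (h : t ≤ φ t) : t = 0 := by
  by_contra h0
  exact absurd (lt_of_le_of_lt h (hφ.2.2 t (zero_lt_iff.mpr h0)).2) (lt_irrefl t)

lemma InPhi.exists_delta {φ : ℝ≥0 → ℝ≥0} (hφ : InPhi φ) {ε : ℝ≥0} (hε : 0 < ε) :
    ∃ δ : ℝ≥0, 0 < δ ∧ δ ≤ ε ∧ φ (ε + δ) + δ ≤ ε := by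
  have hc : Filter.Tendsto (fun δ : ℝ≥0 => φ (ε + δ) + δ) (nhds 0)
      (nhds (φ (ε + 0) + 0)) := by
    exact ((hφ.2.1.comp (continuous_const.add continuous_id)).add continuous_id).tendsto 0
  have h0 : φ (ε + 0) + 0 < ε := by simpa using (hφ.2.2 ε hε).2
  have hev : ∀ᶠ δ in nhds (0 : ℝ≥0), φ (ε + δ) + δ < ε :=
    hc.eventually_lt_const h0
  obtain ⟨r, hr, hball⟩ := NNReal.nhds_zero_basis.eventually_iff.mp hev
  obtain ⟨δ', hδ'0, hδ'r⟩ := exists_between hr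
  refine ⟨min δ' ε, lt_min hδ'0 hε, min_le_right _ _, ?_⟩
  have : min δ' ε ∈ Set.Iio r := lt_of_le_of_lt (min_le_left _ _) hδ'r
  exact (hball this).le

theorem stmt_11 {X : Type*} [MetricSpace X] (K : Set X) (hK : K.Nonempty)
    (A T : X → X) (hA : MapsTo A K K) (hT : MapsTo T K K)
    (φ : ℝ≥0 → ℝ≥0) (hφ : InPhi φ)
    (hcontr : ∀ x ∈ K, ∀ y ∈ K,
      nndist (T x) (T y) ≤
        φ (max (nndist (A x) (A y))
          (max (nndist (A x) (T x))
          (max (nndist (A y) (T y))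
               (min (nndist (A y) (T x)) (nndist (A x) (T y)))))))
    (hAT : ∀ x ∈ K, A x = T x → A (T x) = T (A x))
    (hTA : closure (T '' K) ⊆ A '' K)
    (hcomp : IsComplete (T '' K) ∨ IsComplete (A '' K)) :
    ∃! z, z ∈ K ∧ A z = z ∧ T z = z := by
  classical
  -- auxiliary: a ≤ φ a → a = 0 was proved above
  have hsub : ∀ a ∈ K, ∃ b, b ∈ K ∧ A b = T a := by
    intro a ha
    obtain ⟨b, hb, hab⟩ := hTA (subset_closure ⟨a, ha, rfl⟩)
    exact ⟨b, hb, hab⟩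
  choose f hfK hfA using hsub
  obtain ⟨x0, hx0⟩ := hK
  let x : ℕ → {a : X // a ∈ K} := fun n =>
    Nat.rec ⟨x0, hx0⟩ (fun _ p => ⟨f p.1 p.2, hfK p.1 p.2⟩) n
  set xi : ℕ → X := fun n => (x n).1 with hxi_def
  have hxiK : ∀ n, xi n ∈ K := fun n => (x n).2
  have key : ∀ n, A (xi (n + 1)) = T (xi n) := fun n => hfA _ _
  set y : ℕ → X := fun n => T (xi n) with hy_def
  set d : ℕ → ℝ≥0 := fun n => nndist (y n) (y (n + 1)) with hd_def
  have contr' : ∀ m n, nndist (y (m + 1)) (y (n + 1)) ≤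
      φ (max (nndist (y m) (y n)) (max (d m) (max (d n)
        (min (nndist (y n) (y (m + 1))) (nndist (y m) (y (n + 1))))))) := by
    intro m n
    have h := hcontr (xi (m + 1)) (hxiK (m + 1)) (xi (n + 1)) (hxiK (n + 1))
    rw [key m, key n] at h
    exact h
  -- d is decreasing and d (n+1) ≤ φ (d n)
  have hdec : ∀ n, d (n + 1) ≤ d n := by
    intro n
    by_contra hlt
    push_neg at hlt
    have h := contr' n (n + 1)
    have hmin : min (nndist (y (n + 1)) (y (n + 1))) (nndist (y n) (y (n + 2))) = 0 := by
      simp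
    rw [hmin] at h
    have hb : max (d n) (max (d n) (max (d (n + 1)) 0)) ≤ d (n + 1) := by
      simp only [max_le_iff]
      exact ⟨hlt.le, hlt.le, le_rfl, zero_le⟩
    have h2 : d (n + 1) ≤ φ (d (n + 1)) := le_trans h (hφ.1 hb)
    have := hφ.eq_zero h2
    exact absurd (this ▸ hlt) (by simp)
  have hstep : ∀ n, d (n + 1) ≤ φ (d n) := by
    intro n
    have h := contr' n (n + 1)
    have hmin : min (nndist (y (n + 1)) (y (n + 1))) (nndist (y n) (y (n + 2))) = 0 := by
      simp
    rw [hmin] at h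
    have hb : max (d n) (max (d n) (max (d (n + 1)) 0)) ≤ d n := by
      simp only [max_le_iff]
      exact ⟨le_rfl, le_rfl, hdec n, zero_le⟩
    exact le_trans h (hφ.1 hb)
  have hanti : Antitone d := antitone_nat_of_succ_le hdec
  have hdlim : Filter.Tendsto d Filter.atTop (nhds 0) := by
    have htend : Filter.Tendsto d Filter.atTop (nhds (⨅ n, d n)) :=
      tendsto_atTop_ciInf hanti (OrderBot.bddBelow _)
    have h1 : Filter.Tendsto (fun n => d (n + 1)) Filter.atTop (nhds (⨅ n, d n)) :=
      htend.comp (Filter.tendsto_add_atTop_nat 1)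
    have h2 : Filter.Tendsto (fun n => φ (d n)) Filter.atTop (nhds (φ (⨅ n, d n))) :=
      (hφ.2.1.tendsto _).comp htend
    have hle : (⨅ n, d n) ≤ φ (⨅ n, d n) := le_of_tendsto_of_tendsto' h1 h2 hstep
    have : (⨅ n, d n) = 0 := hφ.eq_zero hle
    rwa [this] at htend
  -- Cauchy
  have hcauchy : CauchySeq y := by
    rw [Metric.cauchySeq_iff']
    intro ε hε
    set η : ℝ≥0 := Real.toNNReal (ε / 2) with hη_def
    have hη : 0 < η := Real.toNNReal_pos.mpr (by linarith)
    obtain ⟨δ, hδ0, hδη, hδφ⟩ := hφ.exists_delta hη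
    obtain ⟨N, hN⟩ := (Filter.eventually_atTop.mp (hdlim.eventually (Iio_mem_nhds hδ0)))
    have claim : ∀ m, nndist (y N) (y (N + m)) ≤ η := by
      intro m
      induction m with
      | zero => simp
      | succ m ih =>
        have hb := contr' N (N + m)
        have harg : max (nndist (y N) (y (N + m))) (max (d N) (max (d (N + m))
            (min (nndist (y (N + m)) (y (N + 1))) (nndist (y N) (y (N + m + 1)))))) ≤ η + δ := by
          have h1 : nndist (y N) (y (N + m)) ≤ η + δ := le_trans ih (le_self_add)
          have h2 : d N ≤ η + δ := le_trans (hN N le_rfl).le (le_add_self)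
          have h3 : d (N + m) ≤ η + δ := le_trans (hN (N + m) (Nat.le_add_right _ _)).le le_add_self
          have h4 : min (nndist (y (N + m)) (y (N + 1))) (nndist (y N) (y (N + m + 1))) ≤ η + δ := by
            refine le_trans (min_le_left _ _) ?_
            calc nndist (y (N + m)) (y (N + 1)) ≤ nndist (y (N + m)) (y N) + nndist (y N) (y (N + 1)) :=
                nndist_triangle _ _ _
              _ ≤ η + δ := add_le_add (by rwa [nndist_comm]) (hN N le_rfl).le
          simp only [max_le_iff]
          exact ⟨h1, h2, h3, h4⟩
        have hb2 : nndist (y (N + 1)) (y (N + m + 1)) ≤ φ (η + δ) :=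
          le_trans hb (hφ.1 harg)
        calc nndist (y N) (y (N + m + 1)) ≤ nndist (y N) (y (N + 1)) + nndist (y (N + 1)) (y (N + m + 1)) :=
            nndist_triangle _ _ _
          _ ≤ δ + φ (η + δ) := add_le_add (hN N le_rfl).le hb2
          _ ≤ η := by rw [add_comm]; exact hδφ
    refine ⟨N, fun n hn => ?_⟩
    obtain ⟨m, rfl⟩ := Nat.exists_eq_add_of_le hn
    have := claim m
    have hd' : dist (y (N + m)) (y N) ≤ (η : ℝ) := by
      rw [dist_nndist, nndist_comm]
      exact_mod_cast this
    have : (η : ℝ) = ε / 2 := Real.coe_toNNReal _ (by linarith)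
    linarith [hd']
  -- limit point
  obtain ⟨p, hpA, hpy⟩ : ∃ p ∈ A '' K, Filter.Tendsto y Filter.atTop (nhds p) := by
    rcases hcomp with h | h
    · obtain ⟨p, hp, ht⟩ := cauchySeq_tendsto_of_isComplete h
        (fun n => ⟨xi n, hxiK n, rfl⟩) hcauchy
      exact ⟨p, hTA (subset_closure hp), ht⟩
    · obtain ⟨p, hp, ht⟩ := cauchySeq_tendsto_of_isComplete h
        (fun n => ⟨xi (n + 1), hxiK (n + 1), key n⟩) hcauchy
      exact ⟨p, hp, ht⟩
  obtain ⟨u, huK, huA⟩ := hpA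
  -- T u = p
  have hy1 : Filter.Tendsto (fun n => y (n + 1)) Filter.atTop (nhds p) :=
    hpy.comp (Filter.tendsto_add_atTop_nat 1)
  have hTu : T u = p := by
    have h1 : ∀ n, nndist (T u) (y (n + 1)) ≤
        φ (max (nndist p (y n)) (max (nndist p (T u)) (max (d n)
          (min (nndist (y n) (T u)) (nndist p (y (n + 1))))))) := by
      intro n
      have h := hcontr u huK (xi (n + 1)) (hxiK (n + 1))
      rw [key n, huA] at h
      exact h
    have l1 : Filter.Tendsto (fun n => nndist (T u) (y (n + 1))) Filter.atTop
        (nhds (nndist (T u) p)) := tendsto_const_nhds.nndist hy1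
    have larg : Filter.Tendsto (fun n => max (nndist p (y n)) (max (nndist p (T u)) (max (d n)
        (min (nndist (y n) (T u)) (nndist p (y (n + 1))))))) Filter.atTop
        (nhds (max (nndist p p) (max (nndist p (T u)) (max 0
          (min (nndist p (T u)) (nndist p p)))))) := by
      refine (tendsto_const_nhds.nndist hpy).max ?_
      refine tendsto_const_nhds.max ?_
      refine hdlim.max ?_
      exact (hpy.nndist tendsto_const_nhds).min (tendsto_const_nhds.nndist hy1)
    have harg_eq : max (nndist p p) (max (nndist p (T u)) (max 0
        (min (nndist p (T u)) (nndist p p)))) = nndist p (T u) := by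
      simp
    rw [harg_eq] at larg
    have l2 : Filter.Tendsto (fun n => φ (max (nndist p (y n)) (max (nndist p (T u)) (max (d n)
        (min (nndist (y n) (T u)) (nndist p (y (n + 1)))))))) Filter.atTop
        (nhds (φ (nndist p (T u)))) := (hφ.2.1.tendsto _).comp larg
    have hle : nndist (T u) p ≤ φ (nndist p (T u)) := le_of_tendsto_of_tendsto' l1 l2 h1
    rw [nndist_comm] at hle
    have := hφ.eq_zero hle
    rw [nndist_comm] at this
    exact nndist_eq_zero.mp this
  have hAu : A u = T u := huA.trans hTu.symm
  have hpK : p ∈ K := hTu ▸ hT huK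
  have hAp : A p = T p := by
    have h := hAT u huK hAu
    rwa [hTu, huA] at h
  -- T p = p
  have hTp : T p = p := by
    have h := hcontr p hpK u huK
    rw [hAp, huA, hTu] at h
    have heq : max (nndist (T p) p) (max (nndist (T p) (T p)) (max (nndist p p)
        (min (nndist p (T p)) (nndist (T p) p)))) = nndist (T p) p := by
      simp [nndist_comm p (T p)]
    rw [heq] at h
    exact nndist_eq_zero.mp (hφ.eq_zero h)
  have hApp : A p = p := hAp.trans hTp
  refine ⟨p, ⟨hpK, hApp, hTp⟩, ?_⟩
  rintro w ⟨hwK, hwA, hwT⟩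
  have h := hcontr w hwK p hpK
  rw [hwA, hwT, hApp, hTp] at h
  have heq : max (nndist w p) (max (nndist w w) (max (nndist p p)
      (min (nndist p w) (nndist w p)))) = nndist w p := by
    simp [nndist_comm p w]
  rw [heq] at h
  exact nndist_eq_zero.mp (hφ.eq_zero h)
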